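/- (Angle bound in a thin triangle.) In a triangle in ℝ² with vertices A, B, C and opposite side lengths a, b, c satisfying (a+b)/c ≤ 1 + ε for ε ∈ [0, 0.5], the smaller of the two base angles satisfies min{∠A, ∠B} ≤ max{ π − arccos(−1 + √(ε/(1+ε))), arcsin(√(ε/(1+ε))/2) }. -/

import Mathlib

open EuclideanGeometry

private lemma arccos_anti {x y : ℝ} (hxy : x ≤ y) : Real.arccos y ≤ Real.arccos x := by
  unfold Real.arccos
  have := Real.monotone_arcsin hxy
  linarith

private lemma aux_thin (A B C : EuclideanSpace ℝ (Fin 2)) (ε : ℝ)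
    (hε0 : 0 ≤ ε) (hε1 : ε ≤ 0.5)
    (hc : 0 < dist A B)
    (h : dist B C + dist A C ≤ (1 + ε) * dist A B)
    (hab : dist B C ≤ dist A C) :
    ∠ B A C ≤ Real.pi - Real.arccos (-1 + Real.sqrt (ε / (1 + ε))) := by
  set a := dist B C with ha_def
  set b := dist A C with hb_def
  set c := dist A B with hc_def
  have ha0 : 0 ≤ a := dist_nonneg
  have ht1 : c ≤ b + a := by
    calc c ≤ dist A C + dist C B := dist_triangle A C B
    _ = b + a := by rw [dist_comm C B]
  have ht2 : b ≤ c + a := by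
    calc b ≤ dist A B + dist B C := dist_triangle A B C
    _ = c + a := rfl
  have hb0 : 0 < b := by
    by_contra hb
    push_neg at hb
    have : b = 0 := le_antisymm hb dist_nonneg
    have : a = 0 := le_antisymm (this ▸ hab) ha0
    nlinarith
  -- law of cosines at A
  have hlaw := EuclideanGeometry.law_cos B A C
  have hBA : dist B A = c := dist_comm B A
  have hCA : dist C A = b := dist_comm C A
  rw [hBA, hCA] at hlaw
  -- key polynomial inequality
  have hkey : 2 * b * c ≤ (1 + ε) * (b ^ 2 + c ^ 2 - a ^ 2) := by
    nlinarith [sq_nonneg (b + c - a), sq_nonneg (b - c),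
      mul_nonneg (sub_nonneg.2 ht1) (sub_nonneg.2 ht2),
      mul_nonneg (sub_nonneg.2 hab) (sub_nonneg.2 ht1), mul_pos hb0 hc,
      sq_nonneg (a + b - c), mul_nonneg (sub_nonneg.2 hab) hc.le]
  have hcosval : b ^ 2 + c ^ 2 - a ^ 2 = 2 * c * b * Real.cos (∠ B A C) := by
    nlinarith [hlaw]
  have hcos : 1 / (1 + ε) ≤ Real.cos (∠ B A C) := by
    rw [div_le_iff₀ (by linarith)]
    nlinarith [mul_pos hb0 hc]
  set t := ε / (1 + ε) with ht_def
  have ht0 : 0 ≤ t := by positivity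
  have ht1' : t ≤ 1 := by
    rw [ht_def, div_le_one (by linarith)]; linarith
  have hsqrt : t ≤ Real.sqrt t := by
    nlinarith [Real.sq_sqrt ht0, Real.sqrt_nonneg t, Real.sqrt_le_sqrt ht1',
      Real.sqrt_one]
  have h1t : 1 - Real.sqrt t ≤ Real.cos (∠ B A C) := by
    have : 1 / (1 + ε) = 1 - t := by
      rw [ht_def]; field_simp; ring
    linarith
  -- rewrite the bound as an arccos
  have hrw : Real.pi - Real.arccos (-1 + Real.sqrt t) = Real.arccos (1 - Real.sqrt t) := by
    have := Real.arccos_neg (1 - Real.sqrt t)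
    have hneg : -(1 - Real.sqrt t) = -1 + Real.sqrt t := by ring
    rw [hneg] at this
    linarith
  rw [hrw]
  have hangle : ∠ B A C = Real.arccos (Real.cos (∠ B A C)) :=
    (Real.arccos_cos (EuclideanGeometry.angle_nonneg B A C)
      (EuclideanGeometry.angle_le_pi B A C)).symm
  rw [hangle]
  exact arccos_anti h1t

/-- Angle bound in a thin triangle: if `(a+b)/c ≤ 1+ε` with `ε ∈ [0, 0.5]`, then
the smaller of the two base angles at `A` and `B` is at most
`max (π − arccos(−1 + √(ε/(1+ε)))) (arcsin(√(ε/(1+ε))/2))`. -/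
theorem stmt_19 (A B C : EuclideanSpace ℝ (Fin 2)) (ε : ℝ)
    (hε : ε ∈ Set.Icc (0 : ℝ) 0.5)
    (hc : 0 < dist A B)
    (h : (dist B C + dist A C) / dist A B ≤ 1 + ε) :
    min (∠ B A C) (∠ A B C) ≤
      max (Real.pi - Real.arccos (-1 + Real.sqrt (ε / (1 + ε))))
          (Real.arcsin (Real.sqrt (ε / (1 + ε)) / 2)) := by
  obtain ⟨hε0, hε1⟩ := hε
  have h' : dist B C + dist A C ≤ (1 + ε) * dist A B := by
    rwa [div_le_iff₀ hc] at h
  rcases le_total (dist B C) (dist A C) with hab | hab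
  · refine le_trans (min_le_left _ _) (le_trans ?_ (le_max_left _ _))
    exact aux_thin A B C ε hε0 hε1 hc h' hab
  · refine le_trans (min_le_right _ _) (le_trans ?_ (le_max_left _ _))
    have hc' : 0 < dist B A := by rwa [dist_comm]
    have h'' : dist A C + dist B C ≤ (1 + ε) * dist B A := by
      rw [dist_comm B A]; linarith
    exact aux_thin B A C ε hε0 hε1 hc' h'' hab
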